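/- For a Hermitian matrix u, the curve t ↦ exp(tu) is a constant-speed geodesic for the Thompson metric on positive definite matrices: d_T(exp(su), exp(tu)) = |t - s|·‖u‖, where ‖u‖ is the maximal absolute value of the eigenvalues of u. -/

import Mathlib

open scoped ComplexOrder

/-- `Mmat A B = inf {t > 0 : t • B - A` positive definite `}`. -/
noncomputable def Mmat {n : ℕ} (A B : Matrix (Fin n) (Fin n) ℂ) : ℝ :=
  sInf {t : ℝ | 0 < t ∧ (t • B - A).PosDef}

/-- The Thompson metric `d_T(A,B) = log max(M(A,B), M(B,A))`. -/
noncomputable def dThompson {n : ℕ} (A B : Matrix (Fin n) (Fin n) ℂ) : ℝ :=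
  Real.log (max (Mmat A B) (Mmat B A))

section aux

open Matrix

variable {n : ℕ}

lemma posDef_conj_aux {U D : Matrix (Fin n) (Fin n) ℂ}
    (hU : U ∈ Matrix.unitaryGroup (Fin n) ℂ) (hD : D.PosDef) :
    (U * D * star U).PosDef := by
  have hU1 : U * star U = 1 := (Matrix.mem_unitaryGroup_iff).mp hU
  have hU2 : star U * U = 1 := (Matrix.mem_unitaryGroup_iff').mp hU
  rw [Matrix.posDef_iff_dotProduct_mulVec] at hD ⊢
  constructor
  · have := hD.1.eq
    simp [Matrix.IsHermitian, Matrix.star_eq_conjTranspose, Matrix.conjTranspose_mul,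
      mul_assoc, hD.1.eq]
  · intro x hx
    have hy : (Uᴴ *ᵥ x) ≠ 0 := by
      intro h
      apply hx
      have : U *ᵥ (Uᴴ *ᵥ x) = U *ᵥ 0 := by rw [h]
      rwa [Matrix.mulVec_mulVec, ← Matrix.star_eq_conjTranspose, hU1, Matrix.one_mulVec,
        Matrix.mulVec_zero] at this
    have := hD.2 hy
    calc (0 : ℂ) < dotProduct (star (Uᴴ *ᵥ x)) (D *ᵥ (Uᴴ *ᵥ x)) := this
    _ = dotProduct (star x) ((U * D * star U) *ᵥ x) := by
        rw [Matrix.star_mulVec, Matrix.star_eq_conjTranspose, Matrix.conjTranspose_conjTranspose,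
          ← Matrix.dotProduct_mulVec, Matrix.mulVec_mulVec, Matrix.mulVec_mulVec]

lemma posDef_conj_iff {U D : Matrix (Fin n) (Fin n) ℂ}
    (hU : U ∈ Matrix.unitaryGroup (Fin n) ℂ) :
    (U * D * star U).PosDef ↔ D.PosDef := by
  refine ⟨fun h => ?_, posDef_conj_aux hU⟩
  have hU' : star U ∈ Matrix.unitaryGroup (Fin n) ℂ := Unitary.star_mem hU
  have := posDef_conj_aux hU' h
  have hU2 : star U * U = 1 := (Matrix.mem_unitaryGroup_iff').mp hU
  rwa [star_star, show star U * (U * D * star U) * U = D by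
    rw [← mul_assoc, ← mul_assoc, hU2, one_mul, mul_assoc, hU2, mul_one]] at this

lemma exp_smul_eq (u : Matrix (Fin n) (Fin n) ℂ) (hu : u.IsHermitian) (r : ℝ) :
    NormedSpace.exp (r • u) = (hu.eigenvectorUnitary : Matrix (Fin n) (Fin n) ℂ) *
      Matrix.diagonal (fun i => (Real.exp (r * hu.eigenvalues i) : ℂ)) *
      star (hu.eigenvectorUnitary : Matrix (Fin n) (Fin n) ℂ) := by
  set U : Matrix (Fin n) (Fin n) ℂ := (hu.eigenvectorUnitary : Matrix (Fin n) (Fin n) ℂ) with hUdef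
  have hU1 : U * star U = 1 := (Matrix.mem_unitaryGroup_iff).mp hu.eigenvectorUnitary.2
  have hUinv : U⁻¹ = star U := Matrix.inv_eq_right_inv hU1
  have hU2 : star U * U = 1 := (Matrix.mem_unitaryGroup_iff').mp hu.eigenvectorUnitary.2
  have hUunit : IsUnit U := ⟨⟨U, star U, hU1, hU2⟩, rfl⟩
  have hsmul : ∀ D : Matrix (Fin n) (Fin n) ℂ,
      r • (U * D * star U) = U * (r • D) * star U := by
    intro D
    rw [mul_smul_comm, smul_mul_assoc]
  have h1 : r • u = U * Matrix.diagonal (fun i => ((r * hu.eigenvalues i : ℝ) : ℂ)) * U⁻¹ := by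
    rw [hUinv]
    conv_lhs => rw [hu.spectral_theorem, Unitary.conjStarAlgAut_apply]
    rw [hsmul]
    congr 2
    ext i j
    rcases eq_or_ne i j with rfl | h
    · simp [Complex.real_smul]
    · simp [Matrix.diagonal_apply_ne _ h]
  have h2 : (NormedSpace.exp fun i => ((r * hu.eigenvalues i : ℝ) : ℂ)) =
      fun i => ((Real.exp (r * hu.eigenvalues i) : ℝ) : ℂ) := by
    funext i
    rw [Pi.coe_exp, ← Complex.exp_eq_exp_ℂ, ← Complex.ofReal_exp]
  rw [h1, Matrix.exp_conj U _ hUunit, Matrix.exp_diagonal, hUinv, h2]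

lemma Mmat_exp_exp (hn : 0 < n) (u : Matrix (Fin n) (Fin n) ℂ) (hu : u.IsHermitian) (s t : ℝ) :
    Mmat (NormedSpace.exp (s • u)) (NormedSpace.exp (t • u)) =
      Real.exp (⨆ i, (s - t) * hu.eigenvalues i) := by
  haveI : Nonempty (Fin n) := Fin.pos_iff_nonempty.mp hn
  have key : ∀ c : ℝ, (c • NormedSpace.exp (t • u) - NormedSpace.exp (s • u)) =
      (hu.eigenvectorUnitary : Matrix (Fin n) (Fin n) ℂ) * Matrix.diagonal
        (fun i => ((c * Real.exp (t * hu.eigenvalues i)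
          - Real.exp (s * hu.eigenvalues i) : ℝ) : ℂ)) *
        star (hu.eigenvectorUnitary : Matrix (Fin n) (Fin n) ℂ) := by
    intro c
    rw [exp_smul_eq u hu s, exp_smul_eq u hu t, ← smul_mul_assoc, ← mul_smul_comm,
      ← Matrix.sub_mul, ← Matrix.mul_sub]
    congr 2
    ext i j
    rcases eq_or_ne i j with rfl | h
    · simp [Complex.real_smul]
    · simp [Matrix.diagonal_apply_ne _ h]
  have hset : {c : ℝ | 0 < c ∧ (c • NormedSpace.exp (t • u) - NormedSpace.exp (s • u)).PosDef}
      = Set.Ioi (Real.exp (⨆ i, (s - t) * hu.eigenvalues i)) := by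
    ext c
    have hpd : (c • NormedSpace.exp (t • u) - NormedSpace.exp (s • u)).PosDef ↔
        ∀ i, Real.exp ((s - t) * hu.eigenvalues i) < c := by
      rw [key c, posDef_conj_iff hu.eigenvectorUnitary.2, Matrix.posDef_diagonal_iff]
      apply forall_congr'
      intro i
      rw [Complex.zero_lt_real, sub_pos, sub_mul, Real.exp_sub, div_lt_iff₀ (Real.exp_pos _)]
    constructor
    · rintro ⟨hc, h⟩
      rw [hpd] at h
      obtain ⟨i, hi⟩ := exists_eq_ciSup_of_finite (f := fun i => (s - t) * hu.eigenvalues i)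
      simpa [Set.mem_Ioi, ← hi] using h i
    · intro hc
      have hc' : Real.exp (⨆ i, (s - t) * hu.eigenvalues i) < c := hc
      refine ⟨(Real.exp_pos _).trans hc', hpd.mpr fun i => ?_⟩
      refine lt_of_le_of_lt (Real.exp_le_exp.mpr ?_) hc'
      exact le_ciSup (f := fun i => (s - t) * hu.eigenvalues i)
        (Set.Finite.bddAbove (Set.finite_range _)) i
  rw [Mmat, hset, csInf_Ioi]

end aux

/-- For a Hermitian matrix `u`, the curve `t ↦ exp (t u)` is a constant speed
geodesic for the Thompson metric:
`d_T(exp (s u), exp (t u)) = |t - s| * ‖u‖`, where `‖u‖` is the maximal absolute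
value of the eigenvalues of `u`. -/
theorem dThompson_exp_geodesic {n : ℕ} (hn : 0 < n)
    (u : Matrix (Fin n) (Fin n) ℂ) (hu : u.IsHermitian) (s t : ℝ) :
    dThompson (NormedSpace.exp (s • u)) (NormedSpace.exp (t • u)) =
      |t - s| * ⨆ i, |hu.eigenvalues i| := by
  haveI : Nonempty (Fin n) := Fin.pos_iff_nonempty.mp hn
  set lam := hu.eigenvalues
  rw [dThompson, Mmat_exp_exp hn u hu s t, Mmat_exp_exp hn u hu t s,
    ← Real.exp_monotone.map_max, Real.log_exp]
  have bddA : ∀ f : Fin n → ℝ, BddAbove (Set.range f) :=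
    fun f => Set.Finite.bddAbove (Set.finite_range _)
  have habs : max (⨆ i, (s - t) * lam i) (⨆ i, (t - s) * lam i) = ⨆ i, |s - t| * |lam i| := by
    apply le_antisymm
    · apply max_le
      · exact ciSup_mono (bddA _) fun i => (le_abs_self _).trans (le_of_eq (abs_mul _ _))
      · refine ciSup_mono (bddA _) fun i => ?_
        rw [← abs_mul, show (t - s) * lam i = -((s - t) * lam i) by ring]
        exact neg_le_abs _
    · refine ciSup_le fun i => ?_
      rw [← abs_mul, abs_eq_max_neg]
      refine max_le_max (le_ciSup (f := fun i => (s - t) * lam i) (bddA _) i) ?_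
      rw [show -((s - t) * lam i) = (t - s) * lam i by ring]
      exact le_ciSup (f := fun i => (t - s) * lam i) (bddA _) i
  rw [habs, abs_sub_comm s t]
  apply le_antisymm
  · exact ciSup_le fun i =>
      mul_le_mul_of_nonneg_left (le_ciSup (f := fun i => |lam i|) (bddA _) i) (abs_nonneg _)
  · obtain ⟨i, hi⟩ := exists_eq_ciSup_of_finite (f := fun i => |lam i|)
    rw [← hi]
    exact le_ciSup (bddA fun i => |t - s| * |lam i|) i
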